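/- arXiv:2106.13614 — 3 statements merged into one kernel-verified Lean document; each statement's English description precedes it below -/
import Mathlib

section
/- If X is a 2D random vector with independent components X₁ ~ N(v₁, σ²) and X₂ ~ N(v₂, σ²), then |X| follows a Rice distribution with parameters v = √(v₁² + v₂²) and σ, i.e., |X| has density p(x) = (x/σ²)·exp(−(x² + v²)/(2σ²))·I₀(xv/σ²) for x ≥ 0, where I₀ is the modified Bessel function of the first kind of order zero. -/
open MeasureTheory ProbabilityTheory Real Set intervalIntegral
open scoped ENNReal NNReal

/-- The modified Bessel function of the first kind of order zero,
`I₀(z) = Σ_{k≥0} (z/2)^{2k} / (k!)²`. -/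
noncomputable def besselI0 (z : ℝ) : ℝ :=
  ∑' k : ℕ, (z / 2) ^ (2 * k) / ((Nat.factorial k : ℝ)) ^ 2

namespace RiceAux

lemma bessel_term_nonneg (a : ℝ) (k : ℕ) :
    0 ≤ (a / 2) ^ (2 * k) / ((Nat.factorial k : ℝ)) ^ 2 := by
  have h : (0:ℝ) ≤ (a / 2) ^ (2 * k) := by
    rw [pow_mul]; positivity
  positivity

lemma summable_bessel (a : ℝ) :
    Summable (fun k : ℕ => (a / 2) ^ (2 * k) / ((Nat.factorial k : ℝ)) ^ 2) := by
  have hle : ∀ k : ℕ, (a / 2) ^ (2 * k) / ((Nat.factorial k : ℝ)) ^ 2 ≤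
      ((a/2)^2) ^ k / (Nat.factorial k : ℝ) := by
    intro k
    have h1 : (1 : ℝ) ≤ (Nat.factorial k : ℝ) := by
      exact_mod_cast Nat.one_le_iff_ne_zero.mpr (Nat.factorial_ne_zero k)
    have h2 : (Nat.factorial k : ℝ) ≤ ((Nat.factorial k : ℝ))^2 := by nlinarith
    have h3 : (0:ℝ) ≤ ((a/2)^2) ^ k := by positivity
    rw [pow_mul]
    exact div_le_div_of_nonneg_left h3 (by linarith) h2
  exact Summable.of_nonneg_of_le (fun k => bessel_term_nonneg a k) hle
    (Real.summable_pow_div_factorial _)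

lemma besselI0_nonneg (a : ℝ) : 0 ≤ besselI0 a :=
  tsum_nonneg fun k => bessel_term_nonneg a k

lemma prod_formula (n : ℕ) :
    (∏ i ∈ Finset.range n, (2 * (i : ℝ) + 1) / (2 * i + 2)) =
      (Nat.factorial (2 * n) : ℝ) / (4 ^ n * ((Nat.factorial n : ℝ)) ^ 2) := by
  induction n with
  | zero => simp
  | succ k ih =>
    rw [Finset.prod_range_succ, ih]
    have h2 : Nat.factorial (2 * (k+1)) = (2*k+2) * ((2*k+1) * Nat.factorial (2*k)) := by
      have h : 2 * (k+1) = (2*k+1) + 1 := by ring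
      rw [h, Nat.factorial_succ, Nat.factorial_succ]
    have h3 : Nat.factorial (k+1) = (k+1) * Nat.factorial k := Nat.factorial_succ k
    rw [h2, h3]
    push_cast
    have hf : (Nat.factorial k : ℝ) ≠ 0 := by exact_mod_cast Nat.factorial_ne_zero k
    have hk : (k:ℝ) + 1 ≠ 0 := by positivity
    field_simp
    ring

lemma integral_cos_pow_even' (m : ℕ) :
    (∫ x in (-π)..π, cos x ^ (2 * m)) =
      2 * (π * ∏ i ∈ Finset.range m, (2 * (i : ℝ) + 1) / (2 * i + 2)) := by
  have hc : ∀ n : ℕ, Continuous fun u : ℝ => sin u ^ n := fun n => (continuous_sin.pow n)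
  have step1 : (∫ x in (-π)..π, cos x ^ (2 * m)) =
      ∫ x in (-π)..π, sin (x + π / 2) ^ (2 * m) := by
    refine intervalIntegral.integral_congr fun x _ => ?_
    rw [sin_add_pi_div_two]
  have step2 : (∫ x in (-π)..π, sin (x + π / 2) ^ (2 * m)) =
      ∫ x in (-π + π/2)..(π + π/2), sin x ^ (2 * m) := by
    simpa using integral_comp_add_right (fun x => sin x ^ (2*m)) (π/2)
  have hper : Function.Periodic (fun u : ℝ => sin u ^ (2 * m)) (2 * π) := by
    intro x; simp [sin_add_two_pi]
  have step3 : (∫ x in (-π + π/2)..(π + π/2), sin x ^ (2 * m)) =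
      ∫ x in (0:ℝ)..(2*π), sin x ^ (2 * m) := by
    have h := hper.intervalIntegral_add_eq (-π + π/2) 0
    have e1 : -π + π/2 + 2*π = π + π/2 := by ring
    rw [e1, zero_add] at h
    exact h
  have step4 : (∫ x in (0:ℝ)..(2*π), sin x ^ (2 * m)) =
      (∫ x in (0:ℝ)..π, sin x ^ (2 * m)) + ∫ x in π..(2*π), sin x ^ (2 * m) :=
    (integral_add_adjacent_intervals ((hc _).intervalIntegrable _ _)
      ((hc _).intervalIntegrable _ _)).symm
  have step5 : (∫ x in π..(2*π), sin x ^ (2 * m)) = ∫ x in (0:ℝ)..π, sin x ^ (2 * m) := by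
    have h := integral_comp_add_right (fun x => sin x ^ (2*m)) π (a := 0) (b := π)
    have e1 : (0:ℝ) + π = π := by ring
    have e2 : π + π = 2*π := by ring
    rw [e1, e2] at h
    rw [← h]
    refine intervalIntegral.integral_congr fun x _ => ?_
    rw [sin_add_pi, Even.neg_pow ⟨m, by ring⟩]
  rw [step1, step2, step3, step4, step5, integral_sin_pow_even]
  ring

lemma integral_cos_pow_odd' (m : ℕ) :
    (∫ x in (-π)..π, cos x ^ (2 * m + 1)) = 0 := by
  have hc : Continuous fun u : ℝ => cos u ^ (2*m+1) := continuous_cos.pow _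
  have half : (∫ x in (0:ℝ)..π, cos x ^ (2 * m + 1)) = 0 := by
    have h := integral_comp_sub_left (fun x => cos x ^ (2*m+1)) π (a := 0) (b := π)
    have e1 : π - π = 0 := by ring
    have e2 : π - 0 = π := by ring
    rw [e1, e2] at h
    have h2 : (∫ x in (0:ℝ)..π, cos (π - x) ^ (2*m+1)) =
        - ∫ x in (0:ℝ)..π, cos x ^ (2*m+1) := by
      rw [← intervalIntegral.integral_neg]
      refine intervalIntegral.integral_congr fun x _ => ?_
      rw [cos_pi_sub, Odd.neg_pow ⟨m, by ring⟩]
    rw [h2] at h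
    linarith
  have left : (∫ x in (-π)..(0:ℝ), cos x ^ (2 * m + 1)) =
      ∫ x in (0:ℝ)..π, cos x ^ (2 * m + 1) := by
    have h := integral_comp_neg (fun x => cos x ^ (2*m+1)) (a := -π) (b := 0)
    have h2 : (∫ x in (-π)..(0:ℝ), cos (-x) ^ (2*m+1)) =
        ∫ x in (-π)..(0:ℝ), cos x ^ (2*m+1) := by
      refine intervalIntegral.integral_congr fun x _ => ?_
      rw [cos_neg]
    rw [h2] at h
    rw [h]
    norm_num
  have split : (∫ x in (-π)..π, cos x ^ (2 * m + 1)) =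
      (∫ x in (-π)..(0:ℝ), cos x ^ (2 * m + 1)) + ∫ x in (0:ℝ)..π, cos x ^ (2 * m + 1) :=
    (integral_add_adjacent_intervals (hc.intervalIntegrable _ _)
      (hc.intervalIntegrable _ _)).symm
  rw [split, left, half]
  ring

lemma integral_exp_cos (a φ : ℝ) :
    (∫ θ in (-π)..π, Real.exp (a * Real.cos (θ - φ))) = 2 * π * besselI0 a := by
  -- step 1: remove the phase by change of variables and periodicity
  have step1 : (∫ θ in (-π)..π, Real.exp (a * Real.cos (θ - φ))) =
      ∫ u in (-π)..π, Real.exp (a * Real.cos u) := by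
    have h := integral_comp_sub_right (fun u => Real.exp (a * Real.cos u)) φ (a := -π) (b := π)
    rw [h]
    have hper : Function.Periodic (fun u : ℝ => Real.exp (a * Real.cos u)) (2 * π) := by
      intro x; simp [Real.cos_add_two_pi]
    have h2 := hper.intervalIntegral_add_eq (-π - φ) (-π)
    have e1 : -π - φ + 2 * π = π - φ := by ring
    have e2 : -π + 2 * π = π := by ring
    rw [e1, e2] at h2
    exact h2
  rw [step1]
  -- step 2: series expansion
  have hexp : ∀ u : ℝ, Real.exp (a * Real.cos u) =
      ∑' k : ℕ, (a * Real.cos u) ^ k / (Nat.factorial k : ℝ) := by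
    intro u
    rw [Real.exp_eq_exp_ℝ, NormedSpace.exp_eq_tsum_div]
  have hle : (-π : ℝ) ≤ π := by linarith [pi_pos]
  have hswap : (∫ u in (-π)..π, Real.exp (a * Real.cos u)) =
      ∑' k : ℕ, ∫ u in Ioc (-π) π, (a * Real.cos u) ^ k / (Nat.factorial k : ℝ) := by
    rw [intervalIntegral.integral_of_le hle]
    rw [← integral_tsum]
    · exact setIntegral_congr_fun measurableSet_Ioc fun u _ => hexp u
    · intro k
      exact ((continuous_const.mul continuous_cos).pow k).div_const _
        |>.aestronglyMeasurable.restrict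
    · have hb : ∀ k : ℕ, (∫⁻ u in Ioc (-π) π,
          (‖(a * Real.cos u) ^ k / (Nat.factorial k : ℝ)‖₊ : ENNReal)) ≤
          ENNReal.ofReal (|a| ^ k / (Nat.factorial k : ℝ) * (2 * π)) := by
        intro k
        have hbd : ∀ u : ℝ, (‖(a * Real.cos u) ^ k / (Nat.factorial k : ℝ)‖₊ : ℝ≥0∞) ≤
            ENNReal.ofReal (|a| ^ k / (Nat.factorial k : ℝ)) := by
          intro u
          rw [← ENNReal.ofReal_coe_nnreal, coe_nnnorm]
          apply ENNReal.ofReal_le_ofReal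
          rw [norm_div, norm_pow, norm_mul]
          have h1 : ‖Real.cos u‖ ≤ 1 := by
            rw [Real.norm_eq_abs]; exact abs_cos_le_one u
          have h2 : ‖a‖ * ‖Real.cos u‖ ≤ |a| := by
            calc ‖a‖ * ‖Real.cos u‖ ≤ ‖a‖ * 1 := by
                  exact mul_le_mul_of_nonneg_left h1 (norm_nonneg a)
              _ = |a| := by rw [mul_one, Real.norm_eq_abs]
          have h3 : (‖a‖ * ‖Real.cos u‖) ^ k ≤ |a| ^ k :=
            pow_le_pow_left₀ (by positivity) h2 k
          have h4 : (0:ℝ) < ‖(Nat.factorial k : ℝ)‖ := by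
            rw [Real.norm_eq_abs, abs_of_nonneg (by positivity)]
            exact_mod_cast Nat.factorial_pos k
          rw [Real.norm_eq_abs (Nat.factorial k : ℝ),
            abs_of_nonneg (by positivity : (0:ℝ) ≤ (Nat.factorial k : ℝ))]
          have hfk : (0:ℝ) < (Nat.factorial k : ℝ) := by exact_mod_cast Nat.factorial_pos k
          gcongr
        calc (∫⁻ u in Ioc (-π) π, (‖(a * Real.cos u) ^ k / (Nat.factorial k : ℝ)‖₊ : ENNReal)) ≤
            ∫⁻ _ in Ioc (-π) π, ENNReal.ofReal (|a| ^ k / (Nat.factorial k : ℝ)) :=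
              setLIntegral_mono measurable_const fun u _ => hbd u
          _ = ENNReal.ofReal (|a| ^ k / (Nat.factorial k : ℝ)) * volume (Ioc (-π) π) :=
              setLIntegral_const _ _
          _ = ENNReal.ofReal (|a| ^ k / (Nat.factorial k : ℝ) * (2 * π)) := by
              rw [Real.volume_Ioc, ← ENNReal.ofReal_mul (by positivity)]
              congr 1
              ring
      have hsum : Summable (fun k : ℕ => |a| ^ k / (Nat.factorial k : ℝ) * (2 * π)) :=
        (Real.summable_pow_div_factorial |a|).mul_right _
      have : (∑' k : ℕ, (∫⁻ u in Ioc (-π) π,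
          (‖(a * Real.cos u) ^ k / (Nat.factorial k : ℝ)‖₊ : ENNReal))) ≤
          ∑' k : ℕ, ENNReal.ofReal (|a| ^ k / (Nat.factorial k : ℝ) * (2 * π)) :=
        ENNReal.tsum_le_tsum hb
      refine ne_of_lt (lt_of_le_of_lt this ?_)
      rw [← ENNReal.ofReal_tsum_of_nonneg (fun k => by positivity) hsum]
      exact ENNReal.ofReal_lt_top
  rw [hswap]
  -- step 3: evaluate each term
  have heval : ∀ k : ℕ, (∫ u in Ioc (-π) π, (a * Real.cos u) ^ k / (Nat.factorial k : ℝ)) =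
      a ^ k / (Nat.factorial k : ℝ) * ∫ u in (-π)..π, Real.cos u ^ k := by
    intro k
    rw [intervalIntegral.integral_of_le hle, ← MeasureTheory.integral_const_mul]
    refine setIntegral_congr_fun measurableSet_Ioc fun u _ => ?_
    rw [mul_pow]
    ring
  have g4 : ∀ k : ℕ, (a / 2) ^ (2 * k) = a ^ (2 * k) / 4 ^ k := by
    intro k
    rw [div_pow]
    congr 1
    rw [pow_mul]
    norm_num
  have geven : ∀ m : ℕ, (∫ u in Ioc (-π) π,
      (a * Real.cos u) ^ (2 * m) / (Nat.factorial (2 * m) : ℝ)) =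
      2 * π * ((a / 2) ^ (2 * m) / ((Nat.factorial m : ℝ)) ^ 2) := by
    intro m
    rw [heval, integral_cos_pow_even', prod_formula, g4]
    have hf : ((Nat.factorial (2*m) : ℝ)) ≠ 0 := by exact_mod_cast Nat.factorial_ne_zero _
    have hf2 : ((Nat.factorial m : ℝ)) ≠ 0 := by exact_mod_cast Nat.factorial_ne_zero _
    have h4 : (4:ℝ) ^ m ≠ 0 := by positivity
    field_simp
  have godd : ∀ m : ℕ, (∫ u in Ioc (-π) π,
      (a * Real.cos u) ^ (2 * m + 1) / (Nat.factorial (2 * m + 1) : ℝ)) = 0 := by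
    intro m
    rw [heval, integral_cos_pow_odd', mul_zero]
  -- step 4: sum over even and odd
  set g : ℕ → ℝ := fun k => ∫ u in Ioc (-π) π, (a * Real.cos u) ^ k / (Nat.factorial k : ℝ)
    with hg
  have he : Summable (fun k : ℕ => g (2 * k)) := by
    have : (fun k : ℕ => g (2 * k)) =
        fun k => 2 * π * ((a / 2) ^ (2 * k) / ((Nat.factorial k : ℝ)) ^ 2) := by
      funext m; exact geven m
    rw [this]
    exact (summable_bessel a).mul_left _
  have ho : Summable (fun k : ℕ => g (2 * k + 1)) := by
    have : (fun k : ℕ => g (2 * k + 1)) = fun _ => (0:ℝ) := by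
      funext m; exact godd m
    rw [this]
    exact summable_zero
  have hkey := tsum_even_add_odd he ho
  rw [← hkey]
  have h1 : (∑' k : ℕ, g (2 * k)) = 2 * π * besselI0 a := by
    have : (fun k : ℕ => g (2 * k)) =
        fun k => 2 * π * ((a / 2) ^ (2 * k) / ((Nat.factorial k : ℝ)) ^ 2) := by
      funext m; exact geven m
    rw [this, tsum_mul_left]
    rfl
  have h2 : (∑' k : ℕ, g (2 * k + 1)) = 0 := by
    have : (fun k : ℕ => g (2 * k + 1)) = fun _ => (0:ℝ) := by
      funext m; exact godd m
    rw [this, tsum_zero]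
  rw [h1, h2, add_zero]

theorem lintegral_comp_polarCoord_symm (f : ℝ × ℝ → ℝ≥0∞) :
    (∫⁻ p in polarCoord.target, ENNReal.ofReal p.1 * f (polarCoord.symm p)) = ∫⁻ p, f p := by
  set B : ℝ × ℝ → ℝ × ℝ →L[ℝ] ℝ × ℝ := fun p =>
    LinearMap.toContinuousLinearMap (Matrix.toLin (Module.Basis.finTwoProd ℝ) (Module.Basis.finTwoProd ℝ)
      !![cos p.2, -p.1 * sin p.2; sin p.2, p.1 * cos p.2])
  have A : ∀ p ∈ polarCoord.target, HasFDerivWithinAt polarCoord.symm (B p) polarCoord.target p :=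
    fun p _ => (hasFDerivAt_polarCoord_symm p).hasFDerivWithinAt
  have B_det : ∀ p, (B p).det = p.1 := by
    intro p
    conv_rhs => rw [← one_mul p.1, ← cos_sq_add_sin_sq p.2]
    simp only [B, neg_mul, LinearMap.det_toContinuousLinearMap, LinearMap.det_toLin,
      Matrix.det_fin_two_of, sub_neg_eq_add]
    ring
  symm
  calc
    ∫⁻ p, f p = ∫⁻ p in polarCoord.source, f p := by
      rw [← setLIntegral_univ]
      exact setLIntegral_congr polarCoord_source_ae_eq_univ.symm
    _ = ∫⁻ p in polarCoord.symm '' polarCoord.target, f p := by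
      rw [polarCoord.symm_image_target_eq_source]
    _ = ∫⁻ p in polarCoord.target, ENNReal.ofReal |(B p).det| * f (polarCoord.symm p) :=
      lintegral_image_eq_lintegral_abs_det_fderiv_mul volume
        polarCoord.open_target.measurableSet A
        (polarCoord.symm.injOn) f
    _ = ∫⁻ p in polarCoord.target, ENNReal.ofReal p.1 * f (polarCoord.symm p) := by
      refine setLIntegral_congr_fun polarCoord.open_target.measurableSet
        (fun p hp => ?_)
      rw [B_det, abs_of_pos hp.1]

lemma gauss_prod (μ₁ μ₂ : ℝ) (w : ℝ≥0) (hw : w ≠ 0) :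
    (gaussianReal μ₁ w).prod (gaussianReal μ₂ w) =
      (volume.prod volume).withDensity
        (fun p => gaussianPDF μ₁ w p.1 * gaussianPDF μ₂ w p.2) := by
  refine Measure.prod_eq fun s t hs ht => ?_
  rw [withDensity_apply _ (hs.prod ht), ← Measure.prod_restrict,
    lintegral_prod_mul (measurable_gaussianPDF μ₁ w).aemeasurable
      (measurable_gaussianPDF μ₂ w).aemeasurable,
    gaussianReal_apply _ hw, gaussianReal_apply _ hw]

lemma pdf_prod_eq (w : ℝ≥0) (σ v₁ v₂ : ℝ) (hσ : 0 < σ) (hwr : (w : ℝ) = σ ^ 2) (r θ : ℝ) :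
    gaussianPDFReal v₁ w (r * Real.cos θ) * gaussianPDFReal v₂ w (r * Real.sin θ) =
      (2 * π * σ ^ 2)⁻¹ *
        Real.exp (-(r ^ 2 + (Real.sqrt (v₁ ^ 2 + v₂ ^ 2)) ^ 2) / (2 * σ ^ 2)) *
        Real.exp ((r * Real.sqrt (v₁ ^ 2 + v₂ ^ 2) / σ ^ 2) *
          Real.cos (θ - Complex.arg ⟨v₁, v₂⟩)) := by
  set v : ℝ := Real.sqrt (v₁ ^ 2 + v₂ ^ 2) with hv
  set φ : ℝ := Complex.arg ⟨v₁, v₂⟩ with hφ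
  have habs : ‖(⟨v₁, v₂⟩ : ℂ)‖ = v := by
    rw [Complex.norm_def, Complex.normSq_mk, hv]
    congr 1
    ring
  have hv1 : v * Real.cos φ = v₁ := by
    have := Complex.norm_mul_cos_arg ⟨v₁, v₂⟩
    rwa [habs] at this
  have hv2 : v * Real.sin φ = v₂ := by
    have := Complex.norm_mul_sin_arg ⟨v₁, v₂⟩
    rwa [habs] at this
  have hv2' : v ^ 2 = v₁ ^ 2 + v₂ ^ 2 := Real.sq_sqrt (by positivity)
  have key : (r * Real.cos θ - v₁) ^ 2 + (r * Real.sin θ - v₂) ^ 2 =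
      r ^ 2 + v ^ 2 - 2 * r * v * Real.cos (θ - φ) := by
    rw [Real.cos_sub]
    have h1 : Real.cos θ ^ 2 + Real.sin θ ^ 2 = 1 := Real.cos_sq_add_sin_sq θ
    linear_combination r ^ 2 * h1 + 2 * r * Real.cos θ * hv1 + 2 * r * Real.sin θ * hv2 - hv2'
  have hσ2 : (0:ℝ) < σ ^ 2 := by positivity
  have hK : (0:ℝ) < 2 * π * σ ^ 2 := by positivity
  have hsq : Real.sqrt (2 * π * σ ^ 2) * Real.sqrt (2 * π * σ ^ 2) = 2 * π * σ ^ 2 :=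
    Real.mul_self_sqrt (le_of_lt hK)
  unfold gaussianPDFReal
  rw [hwr]
  rw [show ((√(2 * π * σ ^ 2))⁻¹ * rexp (-(r * Real.cos θ - v₁) ^ 2 / (2 * σ ^ 2))) *
      ((√(2 * π * σ ^ 2))⁻¹ * rexp (-(r * Real.sin θ - v₂) ^ 2 / (2 * σ ^ 2))) =
      ((√(2 * π * σ ^ 2))⁻¹ * (√(2 * π * σ ^ 2))⁻¹) *
        (rexp (-(r * Real.cos θ - v₁) ^ 2 / (2 * σ ^ 2)) *
         rexp (-(r * Real.sin θ - v₂) ^ 2 / (2 * σ ^ 2))) from by ring]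
  rw [← mul_inv, hsq, ← Real.exp_add]
  have hAB : -(r * Real.cos θ - v₁) ^ 2 / (2 * σ ^ 2) + -(r * Real.sin θ - v₂) ^ 2 / (2 * σ ^ 2) =
      -(r ^ 2 + v ^ 2) / (2 * σ ^ 2) + (r * v / σ ^ 2) * Real.cos (θ - φ) := by
    rw [← add_div, ← neg_add, key]
    field_simp
    ring
  rw [hAB, Real.exp_add]
  ring

lemma inner_integral (w : ℝ≥0) (σ v₁ v₂ : ℝ) (hσ : 0 < σ) (hwr : (w : ℝ) = σ ^ 2) (r : ℝ) :
    (∫⁻ θ in Ioo (-π) π, ENNReal.ofReal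
        (gaussianPDFReal v₁ w (r * Real.cos θ) * gaussianPDFReal v₂ w (r * Real.sin θ))) =
      ENNReal.ofReal ((2 * π * σ ^ 2)⁻¹ *
        Real.exp (-(r ^ 2 + (Real.sqrt (v₁ ^ 2 + v₂ ^ 2)) ^ 2) / (2 * σ ^ 2)) *
        (2 * π * besselI0 (r * Real.sqrt (v₁ ^ 2 + v₂ ^ 2) / σ ^ 2))) := by
  set v : ℝ := Real.sqrt (v₁ ^ 2 + v₂ ^ 2) with hv
  set φ : ℝ := Complex.arg ⟨v₁, v₂⟩ with hφ
  set a : ℝ := r * v / σ ^ 2 with ha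
  set C : ℝ := (2 * π * σ ^ 2)⁻¹ * Real.exp (-(r ^ 2 + v ^ 2) / (2 * σ ^ 2)) with hC
  have hCpos : 0 < C := by rw [hC]; positivity
  have step1 : (∫⁻ θ in Ioo (-π) π, ENNReal.ofReal
        (gaussianPDFReal v₁ w (r * Real.cos θ) * gaussianPDFReal v₂ w (r * Real.sin θ))) =
      ∫⁻ θ in Ioo (-π) π, ENNReal.ofReal C * ENNReal.ofReal (Real.exp (a * Real.cos (θ - φ))) := by
    refine lintegral_congr fun θ => ?_
    rw [pdf_prod_eq w σ v₁ v₂ hσ hwr r θ, ← hv, ← hφ, ← ha, ← hC,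
      ENNReal.ofReal_mul (le_of_lt hCpos)]
  rw [step1]
  have hmeas : Measurable fun θ : ℝ => ENNReal.ofReal (Real.exp (a * Real.cos (θ - φ))) := by
    fun_prop
  rw [lintegral_const_mul _ hmeas]
  have hint : IntegrableOn (fun θ : ℝ => Real.exp (a * Real.cos (θ - φ))) (Ioo (-π) π) := by
    have hcont : Continuous fun θ : ℝ => Real.exp (a * Real.cos (θ - φ)) := by fun_prop
    exact (hcont.continuousOn.integrableOn_compact isCompact_Icc).mono_set Ioo_subset_Icc_self
  have step2 : (∫⁻ θ in Ioo (-π) π, ENNReal.ofReal (Real.exp (a * Real.cos (θ - φ)))) =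
      ENNReal.ofReal (∫ θ in Ioo (-π) π, Real.exp (a * Real.cos (θ - φ))) :=
    (ofReal_integral_eq_lintegral_ofReal hint
      (Filter.Eventually.of_forall fun θ => (Real.exp_pos _).le)).symm
  rw [step2]
  have hle : (-π : ℝ) ≤ π := by linarith [pi_pos]
  have step3 : (∫ θ in Ioo (-π) π, Real.exp (a * Real.cos (θ - φ))) = 2 * π * besselI0 a := by
    rw [← MeasureTheory.integral_Ioc_eq_integral_Ioo, ← intervalIntegral.integral_of_le hle]
    exact integral_exp_cos a φ
  rw [step3, ← ENNReal.ofReal_mul (le_of_lt hCpos)]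

end RiceAux

/-- If `X = (X₁, X₂)` has independent components `X₁ ~ N(v₁, σ²)` and `X₂ ~ N(v₂, σ²)`,
then `|X| = √(X₁² + X₂²)` follows a Rice distribution with parameters `v = √(v₁² + v₂²)`
and `σ`, i.e. its law has density `p(x) = (x/σ²)·exp(−(x² + v²)/(2σ²))·I₀(xv/σ²)`
for `x ≥ 0` (and `0` otherwise) with respect to Lebesgue measure. -/
theorem norm_of_gaussian_pair_rice
    {Ω : Type*} [MeasurableSpace Ω] (P : Measure Ω) [IsProbabilityMeasure P]
    (σ v₁ v₂ : ℝ) (hσ : 0 < σ) (X₁ X₂ : Ω → ℝ)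
    (hm₁ : Measurable X₁) (hm₂ : Measurable X₂)
    (h₁ : Measure.map X₁ P = gaussianReal v₁ (Real.toNNReal (σ ^ 2)))
    (h₂ : Measure.map X₂ P = gaussianReal v₂ (Real.toNNReal (σ ^ 2)))
    (hindep : IndepFun X₁ X₂ P) :
    Measure.map (fun ω => Real.sqrt (X₁ ω ^ 2 + X₂ ω ^ 2)) P =
      volume.withDensity (fun x => ENNReal.ofReal
        (if 0 ≤ x then
          x / σ ^ 2 * Real.exp (-(x ^ 2 + (Real.sqrt (v₁ ^ 2 + v₂ ^ 2)) ^ 2) / (2 * σ ^ 2)) *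
            besselI0 (x * Real.sqrt (v₁ ^ 2 + v₂ ^ 2) / σ ^ 2)
         else 0)) := by
  have hσ2 : Real.toNNReal (σ ^ 2) ≠ 0 := by
    rw [Ne, Real.toNNReal_eq_zero, not_le]
    positivity
  set w : ℝ≥0 := Real.toNNReal (σ ^ 2) with hwdef
  have hwr : (w : ℝ) = σ ^ 2 := Real.coe_toNNReal _ (sq_nonneg σ)
  have hσσ : (σ:ℝ) ^ 2 ≠ 0 := by positivity
  have hπ : (π:ℝ) ≠ 0 := pi_ne_zero
  have hg : Measurable fun p : ℝ × ℝ => Real.sqrt (p.1 ^ 2 + p.2 ^ 2) := by fun_prop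
  have hpair : Measure.map (fun ω => (X₁ ω, X₂ ω)) P =
      (gaussianReal v₁ w).prod (gaussianReal v₂ w) := by
    rw [← h₁, ← h₂]
    exact (indepFun_iff_map_prod_eq_prod_map_map hm₁.aemeasurable hm₂.aemeasurable).mp hindep
  have hcomp : Measure.map (fun ω => Real.sqrt (X₁ ω ^ 2 + X₂ ω ^ 2)) P =
      Measure.map (fun p : ℝ × ℝ => Real.sqrt (p.1 ^ 2 + p.2 ^ 2))
        ((gaussianReal v₁ w).prod (gaussianReal v₂ w)) := by
    rw [← hpair, Measure.map_map hg (hm₁.prodMk hm₂)]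
    rfl
  rw [hcomp, RiceAux.gauss_prod v₁ v₂ w hσ2]
  refine Measure.ext fun s hs => ?_
  rw [Measure.map_apply hg hs, withDensity_apply _ (hg hs), withDensity_apply _ hs]
  set v : ℝ := Real.sqrt (v₁ ^ 2 + v₂ ^ 2) with hv
  set g : ℝ × ℝ → ℝ := fun p => Real.sqrt (p.1 ^ 2 + p.2 ^ 2) with hgdef
  set ρ : ℝ × ℝ → ℝ≥0∞ := fun p => gaussianPDF v₁ w p.1 * gaussianPDF v₂ w p.2 with hρ
  set F : ℝ × ℝ → ℝ≥0∞ := fun p =>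
    s.indicator (fun _ => (1:ℝ≥0∞)) p.1 * ENNReal.ofReal p.1 *
      ENNReal.ofReal (gaussianPDFReal v₁ w (p.1 * Real.cos p.2) *
        gaussianPDFReal v₂ w (p.1 * Real.sin p.2)) with hF
  have hFmeas : Measurable F := by
    apply Measurable.mul
    apply Measurable.mul
    · exact (measurable_const.indicator hs).comp measurable_fst
    · exact measurable_fst.ennreal_ofReal
    · refine Measurable.ennreal_ofReal ?_
      exact ((measurable_gaussianPDFReal v₁ w).comp
          (measurable_fst.mul (Real.measurable_cos.comp measurable_snd))).mul
        ((measurable_gaussianPDFReal v₂ w).comp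
          (measurable_fst.mul (Real.measurable_sin.comp measurable_snd)))
  set h' : ℝ → ℝ≥0∞ := fun x => ENNReal.ofReal x *
    ENNReal.ofReal ((2 * π * σ ^ 2)⁻¹ * Real.exp (-(x ^ 2 + v ^ 2) / (2 * σ ^ 2)) *
      (2 * π * besselI0 (x * v / σ ^ 2))) with hh'
  calc ∫⁻ p in g ⁻¹' s, ρ p ∂(volume.prod volume)
      = ∫⁻ p, (g ⁻¹' s).indicator ρ p ∂(volume : Measure (ℝ × ℝ)) := by
        rw [← Measure.volume_eq_prod, lintegral_indicator (hg hs)]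
    _ = ∫⁻ p in polarCoord.target,
          ENNReal.ofReal p.1 * (g ⁻¹' s).indicator ρ (polarCoord.symm p) :=
        (RiceAux.lintegral_comp_polarCoord_symm _).symm
    _ = ∫⁻ p in Ioi (0:ℝ) ×ˢ Ioo (-π) π, F p := by
        refine setLIntegral_congr_fun (measurableSet_Ioi.prod measurableSet_Ioo)
          (fun p hp => ?_)
        have hp1 : (0:ℝ) < p.1 := hp.1
        have hsymm : polarCoord.symm p = (p.1 * Real.cos p.2, p.1 * Real.sin p.2) := rfl
        have hgp : g (polarCoord.symm p) = p.1 := by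
          rw [hsymm, hgdef]
          show Real.sqrt ((p.1 * Real.cos p.2) ^ 2 + (p.1 * Real.sin p.2) ^ 2) = p.1
          have hid : (p.1 * Real.cos p.2) ^ 2 + (p.1 * Real.sin p.2) ^ 2 = p.1 ^ 2 := by
            have h1 := Real.cos_sq_add_sin_sq p.2
            linear_combination p.1 ^ 2 * h1
          rw [hid, Real.sqrt_sq (le_of_lt hp1)]
        by_cases hmem : p.1 ∈ s
        · rw [Set.indicator_of_mem (by rw [mem_preimage, hgp]; exact hmem)]
          rw [hF]
          simp only []
          rw [Set.indicator_of_mem hmem, one_mul, hρ]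
          simp only [hsymm]
          rw [gaussianPDF, gaussianPDF,
            ← ENNReal.ofReal_mul (gaussianPDFReal_nonneg _ _ _)]
        · rw [Set.indicator_of_notMem (by rw [mem_preimage, hgp]; exact hmem),
            hF]
          simp only []
          rw [Set.indicator_of_notMem hmem]
          simp
    _ = ∫⁻ r in Ioi (0:ℝ), ∫⁻ θ in Ioo (-π) π, F (r, θ) := by
        rw [Measure.volume_eq_prod, ← Measure.prod_restrict,
          lintegral_prod _ hFmeas.aemeasurable]
    _ = ∫⁻ r in Ioi (0:ℝ), s.indicator h' r := by
        refine lintegral_congr fun r => ?_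
        have hmeasθ : Measurable fun θ : ℝ => ENNReal.ofReal
            (gaussianPDFReal v₁ w (r * Real.cos θ) * gaussianPDFReal v₂ w (r * Real.sin θ)) := by
          refine Measurable.ennreal_ofReal ?_
          exact ((measurable_gaussianPDFReal v₁ w).comp (Real.measurable_cos.const_mul r)).mul
            ((measurable_gaussianPDFReal v₂ w).comp (Real.measurable_sin.const_mul r))
        have hFr : ∀ θ : ℝ, F (r, θ) = (s.indicator (fun _ => (1:ℝ≥0∞)) r * ENNReal.ofReal r) *
            ENNReal.ofReal (gaussianPDFReal v₁ w (r * Real.cos θ) *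
              gaussianPDFReal v₂ w (r * Real.sin θ)) := by
          intro θ
          rw [hF]
        rw [lintegral_congr hFr, lintegral_const_mul _ hmeasθ,
          RiceAux.inner_integral w σ v₁ v₂ hσ hwr r]
        by_cases hmem : r ∈ s
        · rw [Set.indicator_of_mem hmem, Set.indicator_of_mem hmem, one_mul, hh']
        · rw [Set.indicator_of_notMem hmem, Set.indicator_of_notMem hmem, zero_mul, zero_mul]
    _ = ∫⁻ x in s, ENNReal.ofReal
        (if 0 ≤ x then
          x / σ ^ 2 * Real.exp (-(x ^ 2 + v ^ 2) / (2 * σ ^ 2)) *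
            besselI0 (x * v / σ ^ 2)
         else 0) := by
        have hre : (fun x : ℝ => ENNReal.ofReal
            (if 0 ≤ x then
              x / σ ^ 2 * Real.exp (-(x ^ 2 + v ^ 2) / (2 * σ ^ 2)) *
                besselI0 (x * v / σ ^ 2)
             else 0)) = (Ioi (0:ℝ)).indicator h' := by
          funext x
          by_cases hx : 0 < x
          · rw [Set.indicator_of_mem (mem_Ioi.mpr hx), if_pos (le_of_lt hx)]
            simp only [hh']
            rw [← ENNReal.ofReal_mul (le_of_lt hx)]
            congr 1
            field_simp
          · rw [Set.indicator_of_notMem (by simpa using hx)]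
            rcases eq_or_lt_of_le (le_of_not_gt hx) with heq | hlt
            · subst heq
              simp
            · rw [if_neg (not_le.mpr hlt)]
              simp
        rw [hre]
        rw [← lintegral_indicator hs, ← lintegral_indicator measurableSet_Ioi,
          Set.indicator_indicator, Set.indicator_indicator, Set.inter_comm]
end

section
/- Let u > v > 0, α > 0, β > 1, and γ > α. Define f(σ) = (u/σ + α − γ)^β − (v/σ)^β − α^β for σ > 0. Then f((u−v)/γ) > 0 and f((u−v)/(γ−α)) = −α^β < 0. -/
lemma rpow_superadd (a b β : ℝ) (ha : 0 < a) (hb : 0 < b) (hβ : 1 < β) :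
    a ^ β + b ^ β < (a + b) ^ β := by
  have hab : 0 < a + b := by linarith
  have hβ' : 0 < β - 1 := by linarith
  have hsplit : ∀ x : ℝ, 0 < x → x ^ β = x * x ^ (β - 1) := by
    intro x hx
    rw [← Real.rpow_one_add' hx.le (by linarith)]
    ring_nf
  have ha' : a ^ (β - 1) < (a + b) ^ (β - 1) :=
    Real.rpow_lt_rpow ha.le (by linarith) hβ'
  have hb' : b ^ (β - 1) < (a + b) ^ (β - 1) :=
    Real.rpow_lt_rpow hb.le (by linarith) hβ'
  calc a ^ β + b ^ β = a * a ^ (β - 1) + b * b ^ (β - 1) := by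
        rw [hsplit a ha, hsplit b hb]
    _ < a * (a + b) ^ (β - 1) + b * (a + b) ^ (β - 1) := by
        gcongr
    _ = (a + b) * (a + b) ^ (β - 1) := by ring
    _ = (a + b) ^ β := (hsplit _ hab).symm

/-- For `u > v > 0`, `α > 0`, `β > 1`, `γ > α`, the function
`f(σ) = (u/σ + α − γ)^β − (v/σ)^β − α^β` satisfies `f((u−v)/γ) > 0` and
`f((u−v)/(γ−α)) = −α^β < 0`. -/
theorem f_sign_at_endpoints (u v α β γ : ℝ) (hv : 0 < v) (huv : v < u)
    (hα : 0 < α) (hβ : 1 < β) (hγ : α < γ) :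
    (0 < (u / ((u - v) / γ) + α - γ) ^ β - (v / ((u - v) / γ)) ^ β - α ^ β) ∧
    ((u / ((u - v) / (γ - α)) + α - γ) ^ β - (v / ((u - v) / (γ - α))) ^ β - α ^ β
        = -α ^ β) ∧
    (-α ^ β < 0) := by
  have huv' : 0 < u - v := by linarith
  have hγ0 : 0 < γ := by linarith
  have hγα : 0 < γ - α := by linarith
  refine ⟨?_, ?_, ?_⟩
  · have h1 : u / ((u - v) / γ) + α - γ = v * γ / (u - v) + α := by
      field_simp
      ring
    have h2 : v / ((u - v) / γ) = v * γ / (u - v) := by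
      field_simp
    rw [h1, h2]
    have ht : 0 < v * γ / (u - v) := by positivity
    have := rpow_superadd (v * γ / (u - v)) α β ht hα hβ
    linarith
  · have h1 : u / ((u - v) / (γ - α)) + α - γ = v / ((u - v) / (γ - α)) := by
      field_simp
      ring
    rw [h1]
    ring
  · have : 0 < α ^ β := Real.rpow_pos_of_pos hα β
    linarith
end

section
/- Let u > v > 0, α > 0, β > 1, γ > α, and set σ_max = (u−v)/(γ−α). Define f(σ) = (u/σ + α − γ)^β − (v/σ)^β − α^β. Then f is strictly decreasing on the interval (0, σ_max); consequently f has a unique zero in ((u−v)/γ, σ_max). -/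
open Real Set

private lemma cont_rpow {β : ℝ} (hβ : 0 < β) : Continuous fun x : ℝ => x ^ β :=
  continuous_iff_continuousAt.mpr fun x => Real.continuousAt_rpow_const x β (Or.inr hβ.le)

private lemma aux_mono {y β : ℝ} (hy : 0 < y) (hβ : 1 < β) :
    StrictMonoOn (fun x : ℝ => (x + y) ^ β - x ^ β) (Ici 0) := by
  have hβ0 : 0 < β := lt_trans one_pos hβ
  apply strictMonoOn_of_deriv_pos (convex_Ici 0)
  · exact (((cont_rpow hβ0).comp (continuous_id.add continuous_const)).sub
      (cont_rpow hβ0)).continuousOn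
  · intro x hx
    rw [interior_Ici] at hx
    have hx0 : 0 < x := hx
    have h1 : HasDerivAt (fun x : ℝ => (x + y) ^ β) (1 * β * (x + y) ^ (β - 1)) x :=
      ((hasDerivAt_id x).add_const y).rpow_const (Or.inl (by positivity))
    have h2 : HasDerivAt (fun x : ℝ => x ^ β) (1 * β * x ^ (β - 1)) x :=
      (hasDerivAt_id x).rpow_const (Or.inl hx0.ne')
    rw [HasDerivAt.deriv (f := fun x : ℝ => (x + y) ^ β - x ^ β) (h1.sub h2)]
    have hlt : x ^ (β - 1) < (x + y) ^ (β - 1) :=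
      Real.rpow_lt_rpow hx0.le (by linarith) (by linarith)
    nlinarith

private lemma rpow_superadd_s15 {x y β : ℝ} (hx : 0 < x) (hy : 0 < y) (hβ : 1 < β) :
    x ^ β + y ^ β < (x + y) ^ β := by
  have h := aux_mono hy hβ (self_mem_Ici) (le_of_lt hx : (0:ℝ) ≤ x) hx
  simp only [zero_add, Real.zero_rpow (by positivity : β ≠ 0), sub_zero] at h
  linarith

private lemma g_mono (u v α β γ : ℝ) (hv : 0 < v) (huv : v < u) (hα : 0 < α) (hβ : 1 < β)
    (hγ : α < γ) :
    StrictMonoOn (fun t : ℝ => (u * t + α - γ) ^ β - (v * t) ^ β)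
      (Ici ((γ - α) / (u - v))) := by
  have hβ0 : 0 < β := lt_trans one_pos hβ
  have huv0 : 0 < u - v := by linarith
  have hγα : 0 < γ - α := by linarith
  have ht0 : 0 < (γ - α) / (u - v) := div_pos hγα huv0
  apply strictMonoOn_of_deriv_pos (convex_Ici _)
  · exact (((cont_rpow hβ0).comp
      (((continuous_const.mul continuous_id).add continuous_const).sub continuous_const)).sub
      ((cont_rpow hβ0).comp (continuous_const.mul continuous_id))).continuousOn
  · intro t ht
    rw [interior_Ici] at ht
    have htpos : 0 < t := lt_trans ht0 ht
    have hBpos : 0 < v * t := by positivity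
    have hAB : v * t < u * t + α - γ := by
      have h' : (γ - α) / (u - v) < t := ht
      rw [div_lt_iff₀ huv0] at h'
      nlinarith
    have hApos : 0 < u * t + α - γ := lt_trans hBpos hAB
    have h1 : HasDerivAt (fun t : ℝ => (u * t + α - γ) ^ β)
        ((u * 1) * β * (u * t + α - γ) ^ (β - 1)) t :=
      ((((hasDerivAt_id t).const_mul u).add_const α).sub_const γ).rpow_const (Or.inl hApos.ne')
    have h2 : HasDerivAt (fun t : ℝ => (v * t) ^ β)
        ((v * 1) * β * (v * t) ^ (β - 1)) t :=
      ((hasDerivAt_id t).const_mul v).rpow_const (Or.inl hBpos.ne')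
    rw [HasDerivAt.deriv (f := fun t : ℝ => (u * t + α - γ) ^ β - (v * t) ^ β) (h1.sub h2)]
    have hlt : (v * t) ^ (β - 1) < (u * t + α - γ) ^ (β - 1) :=
      Real.rpow_lt_rpow hBpos.le hAB (by linarith)
    have hApow : 0 < (u * t + α - γ) ^ (β - 1) := Real.rpow_pos_of_pos hApos _
    have hmul : v * (v * t) ^ (β - 1) < u * (u * t + α - γ) ^ (β - 1) :=
      lt_of_le_of_lt (mul_le_mul_of_nonneg_left hlt.le hv.le)
        (mul_lt_mul_of_pos_right huv hApow)
    nlinarith [mul_pos hβ0 (sub_pos.mpr hmul)]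

/-- For `u > v > 0`, `α > 0`, `β > 1`, `γ > α`, with `σ_max = (u−v)/(γ−α)`, the function
`f(σ) = (u/σ + α − γ)^β − (v/σ)^β − α^β` is strictly decreasing on `(0, σ_max)`;
consequently it has a unique zero in `((u−v)/γ, σ_max)`. -/
theorem f_strictAnti_unique_zero (u v α β γ : ℝ) (hv : 0 < v) (huv : v < u)
    (hα : 0 < α) (hβ : 1 < β) (hγ : α < γ) :
    StrictAntiOn (fun σ : ℝ => (u / σ + α - γ) ^ β - (v / σ) ^ β - α ^ β)
      (Set.Ioo 0 ((u - v) / (γ - α))) ∧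
    (∃! σ : ℝ, σ ∈ Set.Ioo ((u - v) / γ) ((u - v) / (γ - α)) ∧
      (u / σ + α - γ) ^ β - (v / σ) ^ β - α ^ β = 0) := by
  have hβ0 : 0 < β := lt_trans one_pos hβ
  have huv0 : 0 < u - v := by linarith
  have hγα : 0 < γ - α := by linarith
  have hγ0 : 0 < γ := lt_trans hα hγ
  set a : ℝ := (u - v) / γ with ha
  set b : ℝ := (u - v) / (γ - α) with hb
  have ha0 : 0 < a := div_pos huv0 hγ0
  have hb0 : 0 < b := div_pos huv0 hγα
  have hab : a < b := by
    rw [ha, hb]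
    exact div_lt_div_of_pos_left huv0 hγα (by linarith)
  have hbinv : b⁻¹ = (γ - α) / (u - v) := by rw [hb, inv_div]
  have hmono := g_mono u v α β γ hv huv hα hβ hγ
  -- strict antitonicity
  have key : StrictAntiOn (fun σ : ℝ => (u / σ + α - γ) ^ β - (v / σ) ^ β - α ^ β)
      (Set.Ioo 0 b) := by
    intro σ₁ h₁ σ₂ h₂ h12
    have hσ₁ : 0 < σ₁ := h₁.1
    have hσ₂ : 0 < σ₂ := h₂.1
    have hi₂ : b⁻¹ < σ₂⁻¹ := by
      rw [inv_lt_inv₀ hb0 hσ₂]; exact h₂.2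
    have hi₁ : σ₂⁻¹ < σ₁⁻¹ := by
      rw [inv_lt_inv₀ hσ₂ hσ₁]; exact h12
    have hm := hmono (by rw [← hbinv]; exact le_of_lt hi₂)
      (by rw [← hbinv]; exact le_of_lt (lt_trans hi₂ hi₁)) hi₁
    simp only [div_eq_mul_inv]
    simp only at hm
    linarith
  refine ⟨key, ?_⟩
  -- continuity on Icc a b
  have hcont : ContinuousOn (fun σ : ℝ => (u / σ + α - γ) ^ β - (v / σ) ^ β - α ^ β)
      (Icc a b) := by
    have hne : ∀ σ ∈ Icc a b, σ ≠ 0 := fun σ hσ => ne_of_gt (lt_of_lt_of_le ha0 hσ.1)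
    exact (((cont_rpow hβ0).comp_continuousOn
        (((continuousOn_const.div continuousOn_id hne).add continuousOn_const).sub
          continuousOn_const)).sub
      ((cont_rpow hβ0).comp_continuousOn (continuousOn_const.div continuousOn_id hne))).sub
      continuousOn_const
  -- value at a
  have hfa : 0 < (u / a + α - γ) ^ β - (v / a) ^ β - α ^ β := by
    have hxa : u / a + α - γ = v / a + α := by
      rw [ha]; field_simp; ring
    rw [hxa]
    have := rpow_superadd_s15 (div_pos hv ha0) hα hβ
    linarith
  -- value at b
  have hfb : (u / b + α - γ) ^ β - (v / b) ^ β - α ^ β < 0 := by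
    have hxb : u / b + α - γ = v / b := by
      rw [hb]; field_simp; ring
    rw [hxb]
    have : (0:ℝ) < α ^ β := Real.rpow_pos_of_pos hα β
    linarith
  have hivt := intermediate_value_Ioo' (le_of_lt hab) hcont
  have h0mem : (0:ℝ) ∈ Ioo ((u / b + α - γ) ^ β - (v / b) ^ β - α ^ β)
      ((u / a + α - γ) ^ β - (v / a) ^ β - α ^ β) := ⟨hfb, hfa⟩
  obtain ⟨σ, hσmem, hσval⟩ := hivt h0mem
  have hsub : Ioo a b ⊆ Ioo 0 b := fun x hx => ⟨lt_trans ha0 hx.1, hx.2⟩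
  exact ⟨σ, ⟨hσmem, hσval⟩, fun σ' ⟨hσ'mem, hσ'val⟩ =>
    key.injOn (hsub hσ'mem) (hsub hσmem) (by simp only at hσval hσ'val ⊢; rw [hσ'val, hσval])⟩
end
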